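/- Let m ≥ 2 be an integer, let u : ℝ^m ∖ {0} → ℝ^{m²} be the Misawa–Nakauchi map, and for α ∈ (0, π/2) define ũ_α : ℝ^m ∖ {0} → ℝ^{m²+1} by ũ_α(x) = (sin α · u(x), cos α), a map into the unit sphere 𝕊^{m²} ⊂ ℝ^{m²+1}. Then ũ_α satisfies the biharmonic map equation Δ²ũ_α + 2 div(|∇ũ_α|² ∇ũ_α) + (|Δũ_α|² + Δ|∇ũ_α|² + 2⟨∇ũ_α, ∇Δũ_α⟩ + 2|∇ũ_α|⁴) ũ_α = 0 at every point of ℝ^m ∖ {0} if and only if sin²α = 1 − 2/m. -/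

import Mathlib

noncomputable section

open Real

/-- Partial derivative of `f` in the `k`-th coordinate direction. -/
def pd {m : ℕ} (k : Fin m) (f : EuclideanSpace ℝ (Fin m) → ℝ)
    (x : EuclideanSpace ℝ (Fin m)) : ℝ :=
  fderiv ℝ f x (EuclideanSpace.single k 1)

/-- Euclidean Laplacian `Δf = Σ_k ∂²f/∂x_k²`. -/
def lap {m : ℕ} (f : EuclideanSpace ℝ (Fin m) → ℝ)
    (x : EuclideanSpace ℝ (Fin m)) : ℝ :=
  ∑ k : Fin m, pd k (pd k f) x

/-- Squared norm of the total derivative of a map `w` with components `w a`: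
`|∇w|² = Σ_{k,a} (∂_k w_a)²`. -/
def gradSq {m : ℕ} {ι : Type*} [Fintype ι]
    (w : ι → EuclideanSpace ℝ (Fin m) → ℝ) (x : EuclideanSpace ℝ (Fin m)) : ℝ :=
  ∑ k : Fin m, ∑ a : ι, (pd k (w a) x) ^ 2

/-- `w` satisfies the (extrinsic) biharmonic map equation for sphere-valued maps at `x`:
`Δ²w + 2 div(|∇w|²∇w) + (|Δw|² + Δ|∇w|² + 2⟨∇w,∇Δw⟩ + 2|∇w|⁴) w = 0`. -/
def IsBiharmonicAt {m : ℕ} {ι : Type*} [Fintype ι]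
    (w : ι → EuclideanSpace ℝ (Fin m) → ℝ) (x : EuclideanSpace ℝ (Fin m)) : Prop :=
  ∀ a : ι,
    lap (lap (w a)) x
      + 2 * ∑ k : Fin m, pd k (fun y => gradSq w y * pd k (w a) y) x
      + ((∑ b : ι, (lap (w b) x) ^ 2) + lap (gradSq w) x
          + 2 * ∑ k : Fin m, ∑ b : ι, pd k (w b) x * pd k (lap (w b)) x
          + 2 * (gradSq w x) ^ 2) * w a x = 0

/-- The Misawa–Nakauchi map `u_{ij}(x) = (1/√(m(m−1)))(−δ_{ij} + m xᵢxⱼ/r²)`. -/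
def uMN (m : ℕ) (i j : Fin m) (x : EuclideanSpace ℝ (Fin m)) : ℝ :=
  (1 / Real.sqrt ((m : ℝ) * ((m : ℝ) - 1))) *
    (-(if i = j then (1 : ℝ) else 0) + (m : ℝ) * x i * x j / ‖x‖ ^ 2)

/-- The rotated map `ũ_α = (sin α · u, cos α)`, with values in `ℝ^{m²+1} = ℝ^{m²} × ℝ`. -/
def uTilde (m : ℕ) (α : ℝ) :
    (Fin m × Fin m) ⊕ Unit → EuclideanSpace ℝ (Fin m) → ℝ
  | Sum.inl p => fun x => Real.sin α * uMN m p.1 p.2 x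
  | Sum.inr _ => fun _ => Real.cos α

namespace MN
variable {m : ℕ}

def sq (y : EuclideanSpace ℝ (Fin m)) : ℝ := ∑ l, y l ^ 2

lemma sq_eq_norm (y : EuclideanSpace ℝ (Fin m)) : ‖y‖ ^ 2 = sq y := by
  rw [EuclideanSpace.norm_eq, Real.sq_sqrt (by positivity)]
  simp [sq, sq_abs]

lemma sq_ne {x : EuclideanSpace ℝ (Fin m)} (hx : x ≠ 0) : sq x ≠ 0 := by
  rw [← sq_eq_norm]; simpa using hx

variable {x : EuclideanSpace ℝ (Fin m)} {k : Fin m} {f g : EuclideanSpace ℝ (Fin m) → ℝ}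

lemma pd_congr (hx : x ≠ 0) (h : ∀ y, y ≠ (0 : EuclideanSpace ℝ (Fin m)) → f y = g y) :
    pd k f x = pd k g x := by
  have hev : f =ᶠ[nhds x] g := by
    filter_upwards [IsOpen.mem_nhds isOpen_compl_singleton
      (by simpa using hx : x ∈ ({0}ᶜ : Set (EuclideanSpace ℝ (Fin m))))] with y hy
    exact h y (by simpa using hy)
  unfold pd; rw [hev.fderiv_eq]

lemma pd_const (c : ℝ) : pd k (fun _ => c) x = 0 := by
  simp [pd]

lemma pd_add (hf : DifferentiableAt ℝ f x) (hg : DifferentiableAt ℝ g x) :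
    pd k (fun y => f y + g y) x = pd k f x + pd k g x := by
  simp [pd, fderiv_fun_add hf hg]

lemma pd_sub (hf : DifferentiableAt ℝ f x) (hg : DifferentiableAt ℝ g x) :
    pd k (fun y => f y - g y) x = pd k f x - pd k g x := by
  simp [pd, fderiv_fun_sub hf hg]

lemma pd_mul (hf : DifferentiableAt ℝ f x) (hg : DifferentiableAt ℝ g x) :
    pd k (fun y => f y * g y) x = f x * pd k g x + g x * pd k f x := by
  simp [pd, fderiv_fun_mul hf hg]

lemma pd_const_mul (hf : DifferentiableAt ℝ f x) (c : ℝ) :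
    pd k (fun y => c * f y) x = c * pd k f x := by
  simp [pd, fderiv_const_mul hf c]

lemma pd_sum {ι : Type*} {s : Finset ι} {F : ι → EuclideanSpace ℝ (Fin m) → ℝ}
    (h : ∀ i ∈ s, DifferentiableAt ℝ (F i) x) :
    pd k (fun y => ∑ i ∈ s, F i y) x = ∑ i ∈ s, pd k (F i) x := by
  simp [pd, fderiv_fun_sum h]

lemma diff_coord {i : Fin m} : DifferentiableAt ℝ (fun y : EuclideanSpace ℝ (Fin m) => y i) x :=
  (EuclideanSpace.proj (𝕜 := ℝ) i).differentiableAt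

lemma pd_coord (i : Fin m) : pd k (fun y : EuclideanSpace ℝ (Fin m) => y i) x
    = if i = k then 1 else 0 := by
  have : (fun y : EuclideanSpace ℝ (Fin m) => y i) = (EuclideanSpace.proj i : _) := rfl
  rw [pd, this, ContinuousLinearMap.fderiv]
  simp [EuclideanSpace.single_apply]

lemma diff_sq : DifferentiableAt ℝ (sq : EuclideanSpace ℝ (Fin m) → ℝ) x := by
  apply DifferentiableAt.fun_sum
  intro i _
  exact (diff_coord (i := i)).pow 2

lemma pd_sq : pd k (sq : EuclideanSpace ℝ (Fin m) → ℝ) x = 2 * x k := by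
  have : pd k (sq : EuclideanSpace ℝ (Fin m) → ℝ) x
      = ∑ i : Fin m, pd k (fun y : EuclideanSpace ℝ (Fin m) => y i * y i) x := by
    rw [show (sq : EuclideanSpace ℝ (Fin m) → ℝ) = fun y => ∑ i : Fin m, y i * y i by
      funext y; simp [sq, pow_two]]
    exact pd_sum fun i _ => diff_coord.mul diff_coord
  rw [this]
  have h2 : ∀ i : Fin m, pd k (fun y : EuclideanSpace ℝ (Fin m) => y i * y i) x
      = x i * (if i = k then 1 else 0) + x i * (if i = k then 1 else 0) := by
    intro i
    rw [pd_mul diff_coord diff_coord, pd_coord]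
  simp only [h2]
  rw [Finset.sum_add_distrib]
  simp [mul_ite, Finset.sum_ite_eq', two_mul]

lemma diff_inv (hx : x ≠ 0) :
    DifferentiableAt ℝ (fun y : EuclideanSpace ℝ (Fin m) => (sq y)⁻¹) x :=
  diff_sq.inv (sq_ne hx)

lemma diff_inv_pow (hx : x ≠ 0) (n : ℕ) :
    DifferentiableAt ℝ (fun y : EuclideanSpace ℝ (Fin m) => (sq y)⁻¹ ^ n) x :=
  (diff_inv hx).pow n

lemma pd_inv (hx : x ≠ 0) :
    pd k (fun y : EuclideanSpace ℝ (Fin m) => (sq y)⁻¹) x = -(2 * x k) * ((sq x)⁻¹) ^ 2 := by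
  have h := (hasDerivAt_inv (sq_ne hx)).comp_hasFDerivAt x diff_sq.hasFDerivAt
  have h' : HasFDerivAt (fun y : EuclideanSpace ℝ (Fin m) => (sq y)⁻¹)
      (-((sq x) ^ 2)⁻¹ • fderiv ℝ sq x) x := h
  rw [pd, h'.fderiv]
  have := pd_sq (k := k) (x := x)
  rw [pd] at this
  simp only [ContinuousLinearMap.coe_smul', Pi.smul_apply, this, smul_eq_mul]
  field_simp

lemma pd_inv_pow (hx : x ≠ 0) (n : ℕ) :
    pd k (fun y : EuclideanSpace ℝ (Fin m) => (sq y)⁻¹ ^ n) x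
      = -(2 * n * x k) * ((sq x)⁻¹) ^ (n + 1) := by
  induction n with
  | zero => simp [pd_const]
  | succ n ih =>
    have : pd k (fun y : EuclideanSpace ℝ (Fin m) => (sq y)⁻¹ ^ (n+1)) x
        = pd k (fun y : EuclideanSpace ℝ (Fin m) => (sq y)⁻¹ ^ n * (sq y)⁻¹) x := by
      simp [pow_succ]
    rw [this, pd_mul (diff_inv_pow hx n) (diff_inv hx), ih, pd_inv hx]
    push_cast
    ring

lemma pd_coord_mul {a : Fin m} (hf : DifferentiableAt ℝ f x) :
    pd k (fun y => y a * f y) x = (if a = k then 1 else 0) * f x + x a * pd k f x := by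
  rw [pd_mul diff_coord hf, pd_coord]
  ring


lemma diff_congr {f g : EuclideanSpace ℝ (Fin m) → ℝ} (hx : x ≠ 0)
    (h : ∀ y, y ≠ (0 : EuclideanSpace ℝ (Fin m)) → f y = g y)
    (hg : DifferentiableAt ℝ g x) : DifferentiableAt ℝ f x := by
  have hev : g =ᶠ[nhds x] f := by
    filter_upwards [IsOpen.mem_nhds isOpen_compl_singleton
      (by simpa using hx : x ∈ ({0}ᶜ : Set (EuclideanSpace ℝ (Fin m))))] with y hy
    exact (h y (by simpa using hy)).symm
  exact hg.congr_of_eventuallyEq hev.symm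

/-! ### monomial derivatives -/

def dl (i j : Fin m) : ℝ := if i = j then 1 else 0

lemma dm1 {a : Fin m} (hx : x ≠ 0) (n : ℕ) :
    DifferentiableAt ℝ (fun y : EuclideanSpace ℝ (Fin m) => y a * ((sq y)⁻¹) ^ n) x :=
  diff_coord.mul (diff_inv_pow hx n)

lemma dm2 {a b : Fin m} (hx : x ≠ 0) (n : ℕ) :
    DifferentiableAt ℝ (fun y : EuclideanSpace ℝ (Fin m) => y a * (y b * ((sq y)⁻¹) ^ n)) x :=
  diff_coord.mul (dm1 hx n)

lemma dm3 {a b c : Fin m} (hx : x ≠ 0) (n : ℕ) :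
    DifferentiableAt ℝ
      (fun y : EuclideanSpace ℝ (Fin m) => y a * (y b * (y c * ((sq y)⁻¹) ^ n))) x :=
  diff_coord.mul (dm2 hx n)

lemma pm1 {a : Fin m} (hx : x ≠ 0) (n : ℕ) :
    pd k (fun y : EuclideanSpace ℝ (Fin m) => y a * ((sq y)⁻¹) ^ n) x
      = dl a k * ((sq x)⁻¹) ^ n - 2 * n * (x a * x k) * ((sq x)⁻¹) ^ (n + 1) := by
  rw [pd_coord_mul (diff_inv_pow hx n), pd_inv_pow hx n]
  simp only [dl]; split_ifs <;> ring

lemma pm2 {a b : Fin m} (hx : x ≠ 0) (n : ℕ) :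
    pd k (fun y : EuclideanSpace ℝ (Fin m) => y a * (y b * ((sq y)⁻¹) ^ n)) x
      = dl a k * (x b * ((sq x)⁻¹) ^ n) + dl b k * (x a * ((sq x)⁻¹) ^ n)
        - 2 * n * (x a * (x b * x k)) * ((sq x)⁻¹) ^ (n + 1) := by
  rw [pd_coord_mul (dm1 hx n), pm1 hx n]
  simp only [dl]; split_ifs <;> ring

lemma pm3 {a b c : Fin m} (hx : x ≠ 0) (n : ℕ) :
    pd k (fun y : EuclideanSpace ℝ (Fin m) => y a * (y b * (y c * ((sq y)⁻¹) ^ n))) x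
      = dl a k * (x b * (x c * ((sq x)⁻¹) ^ n)) + dl b k * (x a * (x c * ((sq x)⁻¹) ^ n))
        + dl c k * (x a * (x b * ((sq x)⁻¹) ^ n))
        - 2 * n * (x a * (x b * (x c * x k))) * ((sq x)⁻¹) ^ (n + 1) := by
  rw [pd_coord_mul (dm2 hx n), pm2 hx n]
  simp only [dl]; split_ifs <;> ring

/-! ### delta sums -/

lemma sum_dl_fst_mul (t : Fin m) (f : Fin m → ℝ) : ∑ j, dl j t * f j = f t := by
  simp [dl, ite_mul, Finset.sum_ite_eq]

lemma sum_dl_snd_mul (t : Fin m) (f : Fin m → ℝ) : ∑ j, dl t j * f j = f t := by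
  simp [dl, ite_mul, Finset.sum_ite_eq']

lemma sum_dl_diag : ∑ j : Fin m, dl j j = m := by
  simp [dl, Finset.card_univ]

lemma sum_xx : ∑ j, x j * x j = sq x := by
  simp [sq, pow_two]

lemma sum_const_fin (c : ℝ) : ∑ _j : Fin m, c = m * c := by
  simp [Finset.card_univ, mul_comm]


lemma dl_self (t : Fin m) : dl t t = 1 := by simp [dl]
lemma dl_comm (i j : Fin m) : dl i j = dl j i := by simp [dl, eq_comm]

/-- master evaluator for sums over one index of delta/coordinate atoms -/
lemma sum_eval (t u : Fin m) (C1 C2 C3 C4 C5 C6 C7 C8 C9 : ℝ) :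
    ∑ j : Fin m, (C1*(x j*x j) + C2*(dl j t*x j) + C3*(dl u j*x j) + C4*(dl j t*dl u j)
      + C5*(dl j t*dl j t) + C6*(dl u j*dl u j) + C7*dl j j + C8 + C9*(dl t j*dl u j))
    = C1*sq x + C2*x t + C3*x u + C4*dl u t + C5 + C6 + C7*m + C8*m + C9*dl u t := by
  simp only [Finset.sum_add_distrib, ← Finset.mul_sum, sum_dl_fst_mul, sum_dl_snd_mul, sum_xx,
    sum_dl_diag, dl_self, Finset.sum_const, Finset.card_univ, Fintype.card_fin, nsmul_eq_mul]
  ring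

/-! ### the explicit formula functions -/

def Vfun (i j : Fin m) : EuclideanSpace ℝ (Fin m) → ℝ :=
  fun y => y i * (y j * ((sq y)⁻¹) ^ 1)

def Dfun (i j k : Fin m) : EuclideanSpace ℝ (Fin m) → ℝ :=
  fun y => dl i k * (y j * ((sq y)⁻¹) ^ 1) + dl j k * (y i * ((sq y)⁻¹) ^ 1)
    - 2 * (y i * (y j * (y k * ((sq y)⁻¹) ^ 2)))

def L2fun (i j : Fin m) : EuclideanSpace ℝ (Fin m) → ℝ :=
  fun y => 2 * dl i j * ((sq y)⁻¹) ^ 1 - 2 * (m : ℝ) * (y i * (y j * ((sq y)⁻¹) ^ 2))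

def D3fun (i j k : Fin m) : EuclideanSpace ℝ (Fin m) → ℝ :=
  fun y => (-4 * dl i j) * (y k * ((sq y)⁻¹) ^ 2) + (-2 * (m : ℝ) * dl i k) * (y j * ((sq y)⁻¹) ^ 2)
    + (-2 * (m : ℝ) * dl j k) * (y i * ((sq y)⁻¹) ^ 2)
    + (8 * (m : ℝ)) * (y i * (y j * (y k * ((sq y)⁻¹) ^ 3)))

def Gfun (i j k : Fin m) : EuclideanSpace ℝ (Fin m) → ℝ :=
  fun y => dl i k * (y j * ((sq y)⁻¹) ^ 2) + dl j k * (y i * ((sq y)⁻¹) ^ 2)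
    + (-2) * (y i * (y j * (y k * ((sq y)⁻¹) ^ 3)))

lemma diff_Vfun {i j : Fin m} (hx : x ≠ 0) : DifferentiableAt ℝ (Vfun i j) x := dm2 hx 1

lemma diff_Dfun {i j k : Fin m} (hx : x ≠ 0) : DifferentiableAt ℝ (Dfun i j k) x :=
  (((dm1 hx 1).const_mul _).add ((dm1 hx 1).const_mul _)).sub ((dm3 hx 2).const_mul 2)

lemma diff_L2fun {i j : Fin m} (hx : x ≠ 0) : DifferentiableAt ℝ (L2fun i j) x :=
  ((diff_inv_pow hx 1).const_mul _).sub ((dm2 hx 2).const_mul _)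

lemma diff_D3fun {i j k : Fin m} (hx : x ≠ 0) : DifferentiableAt ℝ (D3fun i j k) x :=
  ((((dm1 hx 2).const_mul _).add ((dm1 hx 2).const_mul _)).add
    ((dm1 hx 2).const_mul _)).add ((dm3 hx 3).const_mul _)

lemma diff_Gfun {i j k : Fin m} (hx : x ≠ 0) : DifferentiableAt ℝ (Gfun i j k) x :=
  (((dm1 hx 2).const_mul _).add ((dm1 hx 2).const_mul _)).add ((dm3 hx 3).const_mul _)

lemma pd_Vfun {i j : Fin m} (hx : x ≠ 0) : pd k (Vfun i j) x = Dfun i j k x := by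
  unfold Vfun Dfun
  rw [pm2 hx 1]
  push_cast; ring

lemma sum_pd_Dfun {i j : Fin m} (hx : x ≠ 0) :
    ∑ k : Fin m, pd k (Dfun i j k) x = L2fun i j x := by
  have hs := sq_ne hx
  have hterm : ∀ k : Fin m, pd k (Dfun i j k) x =
      (8*(x i*x j)*((sq x)⁻¹)^3)*(x k*x k) + (-4*(x j)*((sq x)⁻¹)^2)*(dl i k*x k)
      + (-4*(x i)*((sq x)⁻¹)^2)*(dl j k*x k) + (2*((sq x)⁻¹)^1)*(dl i k*dl j k)
      + (-2*(x i*x j)*((sq x)⁻¹)^2)*dl k k := by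
    intro k
    unfold Dfun
    rw [pd_sub (((dm1 hx 1).const_mul _).fun_add ((dm1 hx 1).const_mul _))
        ((dm3 hx 2).const_mul 2),
      pd_add ((dm1 hx 1).const_mul _) ((dm1 hx 1).const_mul _),
      pd_const_mul (dm1 hx 1) (dl i k), pd_const_mul (dm1 hx 1) (dl j k),
      pd_const_mul (dm3 hx 2) 2, pm1 (a := j) hx 1, pm1 (a := i) hx 1, pm3 hx 2]
    simp only [dl]; split_ifs <;> push_cast <;> ring
  rw [Finset.sum_congr rfl (fun k _ => hterm k)]
  simp only [Finset.sum_add_distrib, ← Finset.mul_sum, sum_dl_fst_mul, sum_dl_snd_mul, sum_xx,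
    sum_dl_diag, dl_self, Finset.sum_const, Finset.card_univ, Fintype.card_fin, nsmul_eq_mul]
  unfold L2fun
  rw [← dl_comm i j]
  field_simp
  ring

lemma pd_L2fun {i j : Fin m} (hx : x ≠ 0) : pd k (L2fun i j) x = D3fun i j k x := by
  unfold L2fun D3fun
  rw [pd_sub ((diff_inv_pow hx 1).const_mul _) ((dm2 hx 2).const_mul _),
    pd_const_mul (diff_inv_pow hx 1) _, pd_const_mul (dm2 hx 2) _,
    pd_inv_pow hx 1, pm2 hx 2]
  push_cast; ring

lemma sum_pd_D3fun {i j : Fin m} (hx : x ≠ 0) :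
    ∑ k : Fin m, pd k (D3fun i j k) x
      = (16-8*(m:ℝ))*dl i j*((sq x)⁻¹)^2 + (8*(m:ℝ)^2-16*(m:ℝ))*(x i*(x j*((sq x)⁻¹)^3)) := by
  have hs := sq_ne hx
  have hterm : ∀ k : Fin m, pd k (D3fun i j k) x =
      (16*dl i j*((sq x)⁻¹)^3 - 48*(m:ℝ)*(x i*x j)*((sq x)⁻¹)^4)*(x k*x k)
      + (16*(m:ℝ)*(x j)*((sq x)⁻¹)^3)*(dl i k*x k) + (16*(m:ℝ)*(x i)*((sq x)⁻¹)^3)*(dl j k*x k)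
      + (-4*(m:ℝ)*((sq x)⁻¹)^2)*(dl i k*dl j k)
      + (-4*dl i j*((sq x)⁻¹)^2 + 8*(m:ℝ)*(x i*x j)*((sq x)⁻¹)^3)*dl k k := by
    intro k
    unfold D3fun
    rw [pd_add ((((dm1 hx 2).const_mul _).fun_add ((dm1 hx 2).const_mul _)).fun_add
          ((dm1 hx 2).const_mul _)) ((dm3 hx 3).const_mul _),
      pd_add (((dm1 hx 2).const_mul _).fun_add ((dm1 hx 2).const_mul _)) ((dm1 hx 2).const_mul _),
      pd_add ((dm1 hx 2).const_mul _) ((dm1 hx 2).const_mul _),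
      pd_const_mul (dm1 hx 2) _, pd_const_mul (dm1 hx 2) _, pd_const_mul (dm1 hx 2) _,
      pd_const_mul (dm3 hx 3) _,
      pm1 (a := k) hx 2, pm1 (a := j) hx 2, pm1 (a := i) hx 2, pm3 hx 3]
    simp only [dl]; split_ifs <;> push_cast <;> ring
  rw [Finset.sum_congr rfl (fun k _ => hterm k)]
  simp only [Finset.sum_add_distrib, ← Finset.mul_sum, sum_dl_fst_mul, sum_dl_snd_mul, sum_xx,
    sum_dl_diag, dl_self, Finset.sum_const, Finset.card_univ, Fintype.card_fin, nsmul_eq_mul]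
  rw [← dl_comm i j]
  field_simp
  ring

lemma sum_pd_Gfun {i j : Fin m} (hx : x ≠ 0) :
    ∑ k : Fin m, pd k (Gfun i j k) x
      = 2*dl i j*((sq x)⁻¹)^2 - 2*(m:ℝ)*(x i*(x j*((sq x)⁻¹)^3)) := by
  have hs := sq_ne hx
  have hterm : ∀ k : Fin m, pd k (Gfun i j k) x =
      (12*(x i*x j)*((sq x)⁻¹)^4)*(x k*x k)
      + (-6*(x j)*((sq x)⁻¹)^3)*(dl i k*x k) + (-6*(x i)*((sq x)⁻¹)^3)*(dl j k*x k)
      + (2*((sq x)⁻¹)^2)*(dl i k*dl j k) + (-2*(x i*x j)*((sq x)⁻¹)^3)*dl k k := by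
    intro k
    unfold Gfun
    rw [pd_add (((dm1 hx 2).const_mul _).fun_add ((dm1 hx 2).const_mul _)) ((dm3 hx 3).const_mul _),
      pd_add ((dm1 hx 2).const_mul _) ((dm1 hx 2).const_mul _),
      pd_const_mul (dm1 hx 2) _, pd_const_mul (dm1 hx 2) _, pd_const_mul (dm3 hx 3) _,
      pm1 (a := j) hx 2, pm1 (a := i) hx 2, pm3 hx 3]
    simp only [dl]; split_ifs <;> push_cast <;> ring
  rw [Finset.sum_congr rfl (fun k _ => hterm k)]
  simp only [Finset.sum_add_distrib, ← Finset.mul_sum, sum_dl_fst_mul, sum_dl_snd_mul, sum_xx,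
    sum_dl_diag, dl_self, Finset.sum_const, Finset.card_univ, Fintype.card_fin, nsmul_eq_mul]
  rw [← dl_comm i j]
  field_simp
  ring


lemma sum_sq_Dfun (hx : x ≠ 0) :
    ∑ k : Fin m, ∑ i : Fin m, ∑ j : Fin m, (Dfun i j k x)^2 = (2*(m:ℝ)-2)*((sq x)⁻¹)^1 := by
  have hs := sq_ne hx
  have h1 : ∀ k i : Fin m, ∑ j : Fin m, (Dfun i j k x)^2 =
      ((dl i k*((sq x)⁻¹)^1 - 2*(x i*(x k*((sq x)⁻¹)^2)))^2)*sq x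
      + (2*(dl i k*((sq x)⁻¹)^1 - 2*(x i*(x k*((sq x)⁻¹)^2)))*(x i*((sq x)⁻¹)^1))*x k
      + (x i*((sq x)⁻¹)^1)^2 := by
    intro k i
    have hj : ∀ j : Fin m, (Dfun i j k x)^2 =
        ((dl i k*((sq x)⁻¹)^1 - 2*(x i*(x k*((sq x)⁻¹)^2)))^2)*(x j*x j)
        + (2*(dl i k*((sq x)⁻¹)^1 - 2*(x i*(x k*((sq x)⁻¹)^2)))*(x i*((sq x)⁻¹)^1))*(dl j k*x j)
        + ((x i*((sq x)⁻¹)^1)^2)*(dl j k*dl j k) := by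
      intro j
      simp only [Dfun, dl]; split_ifs <;> ring
    rw [Finset.sum_congr rfl (fun j _ => hj j)]
    simp only [Finset.sum_add_distrib, ← Finset.mul_sum, sum_dl_fst_mul, sum_dl_snd_mul, sum_xx,
      sum_dl_diag, dl_self, Finset.sum_const, Finset.card_univ, Fintype.card_fin, nsmul_eq_mul]
    ring
  have h2 : ∀ k : Fin m, ∑ i : Fin m, ∑ j : Fin m, (Dfun i j k x)^2 =
      sq x*((sq x)⁻¹)^2 + (2*(x k)*((sq x)⁻¹)^2 - 4*(x k)*((sq x)⁻¹)^3*sq x)*x k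
      + (((sq x)⁻¹)^2 - 4*(x k*x k)*((sq x)⁻¹)^3 + 4*(x k*x k)*((sq x)⁻¹)^4*sq x)*sq x := by
    intro k
    have hi : ∀ i : Fin m, ∑ j : Fin m, (Dfun i j k x)^2 =
        (sq x*((sq x)⁻¹)^2)*(dl i k*dl i k)
        + (2*(x k)*((sq x)⁻¹)^2 - 4*(x k)*((sq x)⁻¹)^3*sq x)*(dl i k*x i)
        + (((sq x)⁻¹)^2 - 4*(x k*x k)*((sq x)⁻¹)^3 + 4*(x k*x k)*((sq x)⁻¹)^4*sq x)*(x i*x i) := by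
      intro i
      rw [h1 k i]
      simp only [dl]; split_ifs <;> ring
    rw [Finset.sum_congr rfl (fun i _ => hi i)]
    simp only [Finset.sum_add_distrib, ← Finset.mul_sum, sum_dl_fst_mul, sum_dl_snd_mul, sum_xx,
      sum_dl_diag, dl_self, Finset.sum_const, Finset.card_univ, Fintype.card_fin, nsmul_eq_mul]
    ring
  have h3 : ∀ k : Fin m, ∑ i : Fin m, ∑ j : Fin m, (Dfun i j k x)^2 =
      (2*((sq x)⁻¹)^2 - 8*((sq x)⁻¹)^3*sq x + 4*((sq x)⁻¹)^4*(sq x*sq x))*(x k*x k)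
      + 2*sq x*((sq x)⁻¹)^2 := by
    intro k; rw [h2 k]; ring
  rw [Finset.sum_congr rfl (fun k _ => h3 k)]
  simp only [Finset.sum_add_distrib, ← Finset.mul_sum, sum_dl_fst_mul, sum_dl_snd_mul, sum_xx,
    sum_dl_diag, dl_self, Finset.sum_const, Finset.card_univ, Fintype.card_fin, nsmul_eq_mul]
  field_simp
  ring

lemma sum_sq_L2fun (hx : x ≠ 0) :
    ∑ i : Fin m, ∑ j : Fin m, (L2fun i j x)^2 = (4*(m:ℝ)^2-4*(m:ℝ))*((sq x)⁻¹)^2 := by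
  have hs := sq_ne hx
  have h1 : ∀ i : Fin m, ∑ j : Fin m, (L2fun i j x)^2 =
      ((-2*(m:ℝ)*(x i)*((sq x)⁻¹)^2)^2)*sq x
      + (2*(2*((sq x)⁻¹)^1)*(-2*(m:ℝ)*(x i)*((sq x)⁻¹)^2))*x i + (2*((sq x)⁻¹)^1)^2 := by
    intro i
    have hj : ∀ j : Fin m, (L2fun i j x)^2 =
        ((-2*(m:ℝ)*(x i)*((sq x)⁻¹)^2)^2)*(x j*x j)
        + (2*(2*((sq x)⁻¹)^1)*(-2*(m:ℝ)*(x i)*((sq x)⁻¹)^2))*(dl i j*x j)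
        + ((2*((sq x)⁻¹)^1)^2)*(dl i j*dl i j) := by
      intro j
      simp only [L2fun, dl]; split_ifs <;> ring
    rw [Finset.sum_congr rfl (fun j _ => hj j)]
    simp only [Finset.sum_add_distrib, ← Finset.mul_sum, sum_dl_fst_mul, sum_dl_snd_mul, sum_xx,
      sum_dl_diag, dl_self, Finset.sum_const, Finset.card_univ, Fintype.card_fin, nsmul_eq_mul]
    ring
  have h2 : ∀ i : Fin m, ∑ j : Fin m, (L2fun i j x)^2 =
      (4*(m:ℝ)^2*((sq x)⁻¹)^4*sq x - 8*(m:ℝ)*((sq x)⁻¹)^3)*(x i*x i) + 4*((sq x)⁻¹)^2 := by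
    intro i; rw [h1 i]; ring
  rw [Finset.sum_congr rfl (fun i _ => h2 i)]
  simp only [Finset.sum_add_distrib, ← Finset.mul_sum, sum_dl_fst_mul, sum_dl_snd_mul, sum_xx,
    sum_dl_diag, dl_self, Finset.sum_const, Finset.card_univ, Fintype.card_fin, nsmul_eq_mul]
  field_simp
  ring

lemma sum_cross (hx : x ≠ 0) :
    ∑ k : Fin m, ∑ i : Fin m, ∑ j : Fin m, (Dfun i j k x)*(D3fun i j k x)
      = (-4*(m:ℝ)^2+4*(m:ℝ))*((sq x)⁻¹)^2 := by
  have hs := sq_ne hx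
  have h1 : ∀ k i : Fin m, ∑ j : Fin m, (Dfun i j k x)*(D3fun i j k x) =
      ((dl i k*((sq x)⁻¹)^1 - 2*(x i*(x k*((sq x)⁻¹)^2)))
          *(-2*(m:ℝ)*dl i k*((sq x)⁻¹)^2 + 8*(m:ℝ)*(x i*(x k*((sq x)⁻¹)^3))))*sq x
      + ((dl i k*((sq x)⁻¹)^1 - 2*(x i*(x k*((sq x)⁻¹)^2)))*(-4*(x k)*((sq x)⁻¹)^2))*x i
      + ((dl i k*((sq x)⁻¹)^1 - 2*(x i*(x k*((sq x)⁻¹)^2)))*(-2*(m:ℝ)*(x i)*((sq x)⁻¹)^2)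
          + (x i*((sq x)⁻¹)^1)*(-2*(m:ℝ)*dl i k*((sq x)⁻¹)^2 + 8*(m:ℝ)*(x i*(x k*((sq x)⁻¹)^3))))*x k
      + ((x i*((sq x)⁻¹)^1)*(-4*(x k)*((sq x)⁻¹)^2))*dl i k
      + (x i*((sq x)⁻¹)^1)*(-2*(m:ℝ)*(x i)*((sq x)⁻¹)^2) := by
    intro k i
    have hj : ∀ j : Fin m, (Dfun i j k x)*(D3fun i j k x) =
        ((dl i k*((sq x)⁻¹)^1 - 2*(x i*(x k*((sq x)⁻¹)^2)))
            *(-2*(m:ℝ)*dl i k*((sq x)⁻¹)^2 + 8*(m:ℝ)*(x i*(x k*((sq x)⁻¹)^3))))*(x j*x j)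
        + ((dl i k*((sq x)⁻¹)^1 - 2*(x i*(x k*((sq x)⁻¹)^2)))*(-4*(x k)*((sq x)⁻¹)^2))*(dl i j*x j)
        + ((dl i k*((sq x)⁻¹)^1 - 2*(x i*(x k*((sq x)⁻¹)^2)))*(-2*(m:ℝ)*(x i)*((sq x)⁻¹)^2)
            + (x i*((sq x)⁻¹)^1)*(-2*(m:ℝ)*dl i k*((sq x)⁻¹)^2
              + 8*(m:ℝ)*(x i*(x k*((sq x)⁻¹)^3))))*(dl j k*x j)
        + ((x i*((sq x)⁻¹)^1)*(-4*(x k)*((sq x)⁻¹)^2))*(dl j k*dl i j)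
        + ((x i*((sq x)⁻¹)^1)*(-2*(m:ℝ)*(x i)*((sq x)⁻¹)^2))*(dl j k*dl j k) := by
      intro j
      simp only [Dfun, D3fun, dl]; split_ifs <;> ring
    rw [Finset.sum_congr rfl (fun j _ => hj j)]
    simp only [Finset.sum_add_distrib, ← Finset.mul_sum, sum_dl_fst_mul, sum_dl_snd_mul, sum_xx,
      sum_dl_diag, dl_self, Finset.sum_const, Finset.card_univ, Fintype.card_fin, nsmul_eq_mul]
    ring
  have h2 : ∀ k : Fin m, ∑ i : Fin m, ∑ j : Fin m, (Dfun i j k x)*(D3fun i j k x) =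
      (-2*(m:ℝ)*sq x*((sq x)⁻¹)^3)
      + (12*(m:ℝ)*(x k)*sq x*((sq x)⁻¹)^4 - 8*(x k)*((sq x)⁻¹)^3 - 4*(m:ℝ)*(x k)*((sq x)⁻¹)^3)*x k
      + (-16*(m:ℝ)*(x k*x k)*sq x*((sq x)⁻¹)^5 + 8*(x k*x k)*((sq x)⁻¹)^4
          + 12*(m:ℝ)*(x k*x k)*((sq x)⁻¹)^4 - 2*(m:ℝ)*((sq x)⁻¹)^3)*sq x := by
    intro k
    have hi : ∀ i : Fin m, ∑ j : Fin m, (Dfun i j k x)*(D3fun i j k x) =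
        (-2*(m:ℝ)*sq x*((sq x)⁻¹)^3)*(dl i k*dl i k)
        + (12*(m:ℝ)*(x k)*sq x*((sq x)⁻¹)^4 - 8*(x k)*((sq x)⁻¹)^3
            - 4*(m:ℝ)*(x k)*((sq x)⁻¹)^3)*(dl i k*x i)
        + (-16*(m:ℝ)*(x k*x k)*sq x*((sq x)⁻¹)^5 + 8*(x k*x k)*((sq x)⁻¹)^4
            + 12*(m:ℝ)*(x k*x k)*((sq x)⁻¹)^4 - 2*(m:ℝ)*((sq x)⁻¹)^3)*(x i*x i) := by
      intro i
      rw [h1 k i]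
      simp only [dl]; split_ifs <;> ring
    rw [Finset.sum_congr rfl (fun i _ => hi i)]
    simp only [Finset.sum_add_distrib, ← Finset.mul_sum, sum_dl_fst_mul, sum_dl_snd_mul, sum_xx,
      sum_dl_diag, dl_self, Finset.sum_const, Finset.card_univ, Fintype.card_fin, nsmul_eq_mul]
    ring
  have h3 : ∀ k : Fin m, ∑ i : Fin m, ∑ j : Fin m, (Dfun i j k x)*(D3fun i j k x) =
      (12*(m:ℝ)*sq x*((sq x)⁻¹)^4 - 8*((sq x)⁻¹)^3 - 4*(m:ℝ)*((sq x)⁻¹)^3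
        - 16*(m:ℝ)*(sq x*sq x)*((sq x)⁻¹)^5 + 8*sq x*((sq x)⁻¹)^4
        + 12*(m:ℝ)*sq x*((sq x)⁻¹)^4)*(x k*x k)
      + (-2*(m:ℝ)*sq x*((sq x)⁻¹)^3 - 2*(m:ℝ)*((sq x)⁻¹)^3*sq x) := by
    intro k; rw [h2 k]; ring
  rw [Finset.sum_congr rfl (fun k _ => h3 k)]
  simp only [Finset.sum_add_distrib, ← Finset.mul_sum, sum_dl_fst_mul, sum_dl_snd_mul, sum_xx,
    sum_dl_diag, dl_self, Finset.sum_const, Finset.card_univ, Fintype.card_fin, nsmul_eq_mul]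
  field_simp
  ring


def cMN (m : ℕ) : ℝ := 1 / Real.sqrt ((m : ℝ) * ((m : ℝ) - 1))

lemma hmm_pos (hm : 2 ≤ m) : (0:ℝ) < (m:ℝ)*((m:ℝ)-1) := by
  have h2 : (2:ℝ) ≤ (m:ℝ) := by exact_mod_cast hm
  nlinarith

lemma cMN_sq (hm : 2 ≤ m) : (cMN m)^2 = ((m:ℝ)*((m:ℝ)-1))⁻¹ := by
  unfold cMN
  rw [div_pow, one_pow, Real.sq_sqrt (hmm_pos hm).le, one_div]

lemma mR_ne (hm : 2 ≤ m) : (m:ℝ) ≠ 0 := by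
  have h2 : (2:ℝ) ≤ (m:ℝ) := by exact_mod_cast hm
  linarith

lemma mR1_ne (hm : 2 ≤ m) : (m:ℝ) - 1 ≠ 0 := by
  have h2 : (2:ℝ) ≤ (m:ℝ) := by exact_mod_cast hm
  linarith

lemma uMN_eq {i j : Fin m} : ∀ y, y ≠ (0 : EuclideanSpace ℝ (Fin m)) →
    uMN m i j y = cMN m * (-dl i j + (m:ℝ) * Vfun i j y) := by
  intro y hy
  unfold uMN cMN Vfun dl
  rw [sq_eq_norm]
  simp only [div_eq_mul_inv, pow_one]
  ring

lemma diff_uMN {i j : Fin m} (hx : x ≠ 0) : DifferentiableAt ℝ (uMN m i j) x :=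
  diff_congr hx uMN_eq
    (((differentiableAt_const _).add ((diff_Vfun hx).const_mul _)).const_mul _)

lemma pd_uMN {i j : Fin m} (hx : x ≠ 0) :
    pd k (uMN m i j) x = cMN m * ((m:ℝ) * Dfun i j k x) := by
  rw [pd_congr hx uMN_eq,
    pd_const_mul ((differentiableAt_const _).fun_add ((diff_Vfun hx).const_mul _)) _,
    pd_add (differentiableAt_const _) ((diff_Vfun hx).const_mul _),
    pd_const, pd_const_mul (diff_Vfun hx) _, pd_Vfun hx]
  ring

lemma lap_uMN {i j : Fin m} (hx : x ≠ 0) :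
    lap (uMN m i j) x = cMN m * ((m:ℝ) * L2fun i j x) := by
  unfold lap
  have hk : ∀ k : Fin m, pd k (pd k (uMN m i j)) x
      = cMN m * ((m:ℝ) * pd k (Dfun i j k) x) := by
    intro k
    rw [pd_congr hx (fun y hy => pd_uMN hy),
      pd_const_mul ((diff_Dfun hx).const_mul _) _, pd_const_mul (diff_Dfun hx) _]
  rw [Finset.sum_congr rfl (fun k _ => hk k)]
  simp only [← Finset.mul_sum]
  rw [sum_pd_Dfun hx]

lemma pd_lap_uMN {i j : Fin m} (hx : x ≠ 0) :
    pd k (lap (uMN m i j)) x = cMN m * ((m:ℝ) * D3fun i j k x) := by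
  rw [pd_congr hx (fun y hy => lap_uMN hy),
    pd_const_mul ((diff_L2fun hx).const_mul _) _, pd_const_mul (diff_L2fun hx) _,
    pd_L2fun hx]


variable {α : ℝ}

lemma pd_w_inl (p : Fin m × Fin m) {y : EuclideanSpace ℝ (Fin m)} (hy : y ≠ 0) (k : Fin m) :
    pd k (uTilde m α (Sum.inl p)) y
      = Real.sin α * (cMN m * ((m:ℝ) * Dfun p.1 p.2 k y)) := by
  rw [show uTilde m α (Sum.inl p) = fun z => Real.sin α * uMN m p.1 p.2 z from rfl,
    pd_const_mul (diff_uMN hy) _, pd_uMN hy]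

lemma lap_w_inl (p : Fin m × Fin m) (hx : x ≠ 0) :
    lap (uTilde m α (Sum.inl p)) x
      = Real.sin α * (cMN m * ((m:ℝ) * L2fun p.1 p.2 x)) := by
  unfold lap
  have hk : ∀ k : Fin m, pd k (pd k (uTilde m α (Sum.inl p))) x
      = Real.sin α * (cMN m * ((m:ℝ) * pd k (Dfun p.1 p.2 k) x)) := by
    intro k
    rw [pd_congr hx (fun y hy => pd_w_inl p hy k),
      pd_const_mul (((diff_Dfun hx).const_mul _).const_mul _) _,
      pd_const_mul ((diff_Dfun hx).const_mul _) _, pd_const_mul (diff_Dfun hx) _]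
  rw [Finset.sum_congr rfl (fun k _ => hk k)]
  simp only [← Finset.mul_sum]
  rw [sum_pd_Dfun hx]

lemma pd_lap_w_inl (p : Fin m × Fin m) {y : EuclideanSpace ℝ (Fin m)} (hy : y ≠ 0) (k : Fin m) :
    pd k (lap (uTilde m α (Sum.inl p))) y
      = Real.sin α * (cMN m * ((m:ℝ) * D3fun p.1 p.2 k y)) := by
  rw [pd_congr hy (fun z hz => lap_w_inl p hz),
    pd_const_mul (((diff_L2fun hy).const_mul _).const_mul _) _,
    pd_const_mul ((diff_L2fun hy).const_mul _) _, pd_const_mul (diff_L2fun hy) _,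
    pd_L2fun hy]

lemma lap_lap_w_inl (p : Fin m × Fin m) (hx : x ≠ 0) :
    lap (lap (uTilde m α (Sum.inl p))) x
      = Real.sin α * (cMN m * ((m:ℝ) *
          ((16-8*(m:ℝ))*dl p.1 p.2*((sq x)⁻¹)^2
            + (8*(m:ℝ)^2-16*(m:ℝ))*(x p.1*(x p.2*((sq x)⁻¹)^3))))) := by
  conv_lhs => rw [lap]
  have hk : ∀ k : Fin m, pd k (pd k (lap (uTilde m α (Sum.inl p)))) x
      = Real.sin α * (cMN m * ((m:ℝ) * pd k (D3fun p.1 p.2 k) x)) := by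
    intro k
    rw [pd_congr hx (fun y hy => pd_lap_w_inl p hy k),
      pd_const_mul (((diff_D3fun hx).const_mul _).const_mul _) _,
      pd_const_mul ((diff_D3fun hx).const_mul _) _, pd_const_mul (diff_D3fun hx) _]
  rw [Finset.sum_congr rfl (fun k _ => hk k)]
  simp only [← Finset.mul_sum]
  rw [sum_pd_D3fun hx]

lemma pd_w_inr (u : Unit) (y : EuclideanSpace ℝ (Fin m)) (k : Fin m) :
    pd k (uTilde m α (Sum.inr u)) y = 0 := by
  rw [show uTilde m α (Sum.inr u) = fun _ => Real.cos α from rfl]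
  exact pd_const _

lemma lap_w_inr (u : Unit) (y : EuclideanSpace ℝ (Fin m)) :
    lap (uTilde m α (Sum.inr u)) y = 0 := by
  have hk : ∀ k : Fin m, pd k (pd k (uTilde m α (Sum.inr u))) y = 0 := by
    intro k
    rw [show pd k (uTilde m α (Sum.inr u)) = fun _ : EuclideanSpace ℝ (Fin m) => (0:ℝ)
      from funext fun z => pd_w_inr u z k]
    exact pd_const 0
  simp [lap, hk]

lemma lap_lap_w_inr (u : Unit) (y : EuclideanSpace ℝ (Fin m)) :
    lap (lap (uTilde m α (Sum.inr u))) y = 0 := by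
  rw [show lap (uTilde m α (Sum.inr u)) = fun _ : EuclideanSpace ℝ (Fin m) => (0:ℝ)
    from funext fun z => lap_w_inr u z]
  have hk : ∀ k : Fin m, pd k (pd k (fun _ : EuclideanSpace ℝ (Fin m) => (0:ℝ))) y = 0 := by
    intro k
    rw [show pd k (fun _ : EuclideanSpace ℝ (Fin m) => (0:ℝ))
        = fun _ : EuclideanSpace ℝ (Fin m) => (0:ℝ) from funext fun z => pd_const 0]
    exact pd_const 0
  simp [lap, hk]

lemma gradSq_eq (hm : 2 ≤ m) (hx : x ≠ 0) :
    gradSq (uTilde m α) x = 2*(m:ℝ)*Real.sin α^2*((sq x)⁻¹)^1 := by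
  unfold gradSq
  have hk : ∀ k : Fin m, ∑ a : (Fin m × Fin m) ⊕ Unit, (pd k (uTilde m α a) x)^2
      = ∑ i : Fin m, ∑ j : Fin m,
          (Real.sin α^2*(cMN m^2*(m:ℝ)^2))*(Dfun i j k x)^2 := by
    intro k
    rw [Fintype.sum_sum_type, Fintype.sum_prod_type]
    have h1 : ∀ i j : Fin m, (pd k (uTilde m α (Sum.inl (i, j))) x)^2
        = (Real.sin α^2*(cMN m^2*(m:ℝ)^2))*(Dfun i j k x)^2 := by
      intro i j
      rw [pd_w_inl (i, j) hx k]
      ring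
    simp only [pd_w_inr, ne_eq, OfNat.ofNat_ne_zero, not_false_eq_true, zero_pow,
      Finset.sum_const, smul_zero, add_zero, h1]
  rw [Finset.sum_congr rfl (fun k _ => hk k)]
  simp only [← Finset.mul_sum]
  rw [sum_sq_Dfun hx, cMN_sq hm]
  have h1 := mR_ne hm
  have h2 := mR1_ne hm
  have hs := sq_ne hx
  field_simp

lemma lap_gradSq_eq (hm : 2 ≤ m) (hx : x ≠ 0) :
    lap (gradSq (uTilde m α)) x = 2*(m:ℝ)*Real.sin α^2*(8-2*(m:ℝ))*((sq x)⁻¹)^2 := by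
  have hs := sq_ne hx
  have hpd : ∀ (k : Fin m) (y : EuclideanSpace ℝ (Fin m)), y ≠ 0 →
      pd k (gradSq (uTilde m α)) y
        = (-4*(m:ℝ)*Real.sin α^2)*(y k*((sq y)⁻¹)^2) := by
    intro k y hy
    rw [pd_congr hy (fun z hz => gradSq_eq hm hz),
      pd_const_mul (diff_inv_pow hy 1) _, pd_inv_pow hy 1]
    ring
  unfold lap
  have hterm : ∀ k : Fin m, pd k (pd k (gradSq (uTilde m α))) x
      = ((-4*(m:ℝ)*Real.sin α^2)*((sq x)⁻¹)^2)*dl k k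
        + (16*(m:ℝ)*Real.sin α^2*((sq x)⁻¹)^3)*(x k*x k) := by
    intro k
    rw [pd_congr hx (fun y hy => hpd k y hy), pd_const_mul (dm1 hx 2) _, pm1 (a := k) hx 2]
    push_cast; ring
  rw [Finset.sum_congr rfl (fun k _ => hterm k)]
  simp only [Finset.sum_add_distrib, ← Finset.mul_sum, sum_dl_fst_mul, sum_dl_snd_mul, sum_xx,
    sum_dl_diag, dl_self, Finset.sum_const, Finset.card_univ, Fintype.card_fin, nsmul_eq_mul]
  field_simp
  ring

lemma sum_lapsq_eq (hm : 2 ≤ m) (hx : x ≠ 0) :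
    ∑ b : (Fin m × Fin m) ⊕ Unit, (lap (uTilde m α b) x)^2
      = 4*(m:ℝ)^2*Real.sin α^2*((sq x)⁻¹)^2 := by
  rw [Fintype.sum_sum_type, Fintype.sum_prod_type]
  have h1 : ∀ i j : Fin m, (lap (uTilde m α (Sum.inl (i, j))) x)^2
      = (Real.sin α^2*(cMN m^2*(m:ℝ)^2))*(L2fun i j x)^2 := by
    intro i j
    rw [lap_w_inl (i, j) hx]
    ring
  simp only [lap_w_inr, ne_eq, OfNat.ofNat_ne_zero, not_false_eq_true, zero_pow,
    Finset.sum_const, smul_zero, add_zero, h1]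
  simp only [← Finset.mul_sum]
  rw [sum_sq_L2fun hx, cMN_sq hm]
  have h1 := mR_ne hm
  have h2 := mR1_ne hm
  have hs := sq_ne hx
  field_simp

lemma cross_eq (hm : 2 ≤ m) (hx : x ≠ 0) :
    ∑ k : Fin m, ∑ b : (Fin m × Fin m) ⊕ Unit,
        pd k (uTilde m α b) x * pd k (lap (uTilde m α b)) x
      = -4*(m:ℝ)^2*Real.sin α^2*((sq x)⁻¹)^2 := by
  have hk : ∀ k : Fin m, ∑ b : (Fin m × Fin m) ⊕ Unit,
      pd k (uTilde m α b) x * pd k (lap (uTilde m α b)) x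
      = ∑ i : Fin m, ∑ j : Fin m,
          (Real.sin α^2*(cMN m^2*(m:ℝ)^2))*((Dfun i j k x)*(D3fun i j k x)) := by
    intro k
    rw [Fintype.sum_sum_type, Fintype.sum_prod_type]
    have h1 : ∀ i j : Fin m,
        pd k (uTilde m α (Sum.inl (i, j))) x * pd k (lap (uTilde m α (Sum.inl (i, j)))) x
        = (Real.sin α^2*(cMN m^2*(m:ℝ)^2))*((Dfun i j k x)*(D3fun i j k x)) := by
      intro i j
      rw [pd_w_inl (i, j) hx k, pd_lap_w_inl (i, j) hx k]
      ring
    simp only [pd_w_inr, zero_mul, Finset.sum_const, smul_zero, add_zero, h1]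
  rw [Finset.sum_congr rfl (fun k _ => hk k)]
  simp only [← Finset.mul_sum]
  rw [sum_cross hx, cMN_sq hm]
  have h1 := mR_ne hm
  have h2 := mR1_ne hm
  have hs := sq_ne hx
  field_simp
  ring

lemma div_inl_eq (hm : 2 ≤ m) (hx : x ≠ 0) (p : Fin m × Fin m) :
    ∑ k : Fin m, pd k (fun y => gradSq (uTilde m α) y * pd k (uTilde m α (Sum.inl p)) y) x
      = (2*cMN m*(m:ℝ)^2*Real.sin α^3)
          * (2*dl p.1 p.2*((sq x)⁻¹)^2 - 2*(m:ℝ)*(x p.1*(x p.2*((sq x)⁻¹)^3))) := by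
  have hk : ∀ k : Fin m,
      pd k (fun y => gradSq (uTilde m α) y * pd k (uTilde m α (Sum.inl p)) y) x
      = (2*cMN m*(m:ℝ)^2*Real.sin α^3) * pd k (Gfun p.1 p.2 k) x := by
    intro k
    have hcongr : ∀ y, y ≠ (0 : EuclideanSpace ℝ (Fin m)) →
        gradSq (uTilde m α) y * pd k (uTilde m α (Sum.inl p)) y
        = (2*cMN m*(m:ℝ)^2*Real.sin α^3) * Gfun p.1 p.2 k y := by
      intro y hy
      rw [gradSq_eq hm hy, pd_w_inl p hy k]
      simp only [Gfun, Dfun]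
      ring
    rw [pd_congr hx hcongr, pd_const_mul (diff_Gfun hx) _]
  rw [Finset.sum_congr rfl (fun k _ => hk k)]
  simp only [← Finset.mul_sum]
  rw [sum_pd_Gfun hx]

lemma div_inr_eq (u : Unit) (y : EuclideanSpace ℝ (Fin m)) :
    ∑ k : Fin m, pd k (fun z => gradSq (uTilde m α) z * pd k (uTilde m α (Sum.inr u)) z) y
      = 0 := by
  have h0 : ∀ k : Fin m,
      (fun z => gradSq (uTilde m α) z * pd k (uTilde m α (Sum.inr u)) z)
        = fun _ : EuclideanSpace ℝ (Fin m) => (0:ℝ) := by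
    intro k
    funext z
    rw [pd_w_inr u z k, mul_zero]
  have hk : ∀ k : Fin m,
      pd k (fun z => gradSq (uTilde m α) z * pd k (uTilde m α (Sum.inr u)) z) y = 0 := by
    intro k
    rw [h0 k]
    exact pd_const 0
  simp [hk]


end MN

theorem stmt4 (m : ℕ) (hm : 2 ≤ m) (α : ℝ) (hα : α ∈ Set.Ioo 0 (π / 2)) :
    (∀ x : EuclideanSpace ℝ (Fin m), x ≠ 0 → IsBiharmonicAt (uTilde m α) x)
      ↔ Real.sin α ^ 2 = 1 - 2 / (m : ℝ) := by
  have hm' : (2:ℝ) ≤ (m:ℝ) := by exact_mod_cast hm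
  have hmne : (m:ℝ) ≠ 0 := by linarith
  have hpi := Real.pi_pos
  have hsin : 0 < Real.sin α :=
    Real.sin_pos_of_pos_of_lt_pi hα.1 (by linarith [hα.2])
  have hcos : 0 < Real.cos α :=
    Real.cos_pos_of_mem_Ioo ⟨by linarith [hα.1], hα.2⟩
  constructor
  · intro h
    have i0 : Fin m := ⟨0, by omega⟩
    have hx0 : (EuclideanSpace.single i0 (1:ℝ)) ≠ 0 := by
      intro hc
      have h1 : EuclideanSpace.single i0 (1:ℝ) i0 = 0 := by rw [hc]; rfl
      simp [EuclideanSpace.single_apply] at h1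
    have hsq : MN.sq (EuclideanSpace.single i0 (1:ℝ)) = 1 := by
      simp [MN.sq, EuclideanSpace.single_apply, Finset.sum_ite_eq']
    have H := h (EuclideanSpace.single i0 (1:ℝ)) hx0 (Sum.inr ())
    rw [MN.lap_lap_w_inr, MN.div_inr_eq, MN.sum_lapsq_eq hm hx0, MN.lap_gradSq_eq hm hx0,
      MN.cross_eq hm hx0, MN.gradSq_eq hm hx0, hsq,
      show uTilde m α (Sum.inr ()) (EuclideanSpace.single i0 (1:ℝ)) = Real.cos α from rfl] at H
    have H' : 8*(m:ℝ)*Real.sin α^2*Real.cos α*(2-(m:ℝ)+(m:ℝ)*Real.sin α^2) = 0 := by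
      linear_combination H
    have hK : 2-(m:ℝ)+(m:ℝ)*Real.sin α^2 = 0 := by
      have hne : 8*(m:ℝ)*Real.sin α^2*Real.cos α ≠ 0 :=
        mul_ne_zero (mul_ne_zero (mul_ne_zero (by norm_num) hmne)
          (pow_ne_zero 2 hsin.ne')) hcos.ne'
      exact (mul_eq_zero.mp H').resolve_left hne
    field_simp
    linarith [hK]
  · intro hs x hx a
    have hK : 2-(m:ℝ)+(m:ℝ)*Real.sin α^2 = 0 := by
      rw [hs]
      field_simp
      ring
    rcases a with p | u
    · rw [MN.lap_lap_w_inl p hx, MN.div_inl_eq hm hx p, MN.sum_lapsq_eq hm hx,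
        MN.lap_gradSq_eq hm hx, MN.cross_eq hm hx, MN.gradSq_eq hm hx,
        show uTilde m α (Sum.inl p) x = Real.sin α * uMN m p.1 p.2 x from rfl,
        MN.uMN_eq x hx]
      simp only [MN.Vfun]
      linear_combination (8*(m:ℝ)*(1-Real.sin α^2)*Real.sin α*MN.cMN m*
        (MN.dl p.1 p.2*((MN.sq x)⁻¹)^2 - (m:ℝ)*(x p.1*(x p.2*((MN.sq x)⁻¹)^3)))) * hK
    · rw [MN.lap_lap_w_inr, MN.div_inr_eq, MN.sum_lapsq_eq hm hx, MN.lap_gradSq_eq hm hx,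
        MN.cross_eq hm hx, MN.gradSq_eq hm hx,
        show uTilde m α (Sum.inr u) x = Real.cos α from rfl]
      linear_combination (8*(m:ℝ)*Real.sin α^2*((MN.sq x)⁻¹)^2*Real.cos α) * hK
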